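/- For s = 1 and any positive integer n with n > 6 log₂ n + 3, there exists a single-deletion single-substitution correcting binary code of length n with redundancy at most 6 log₂ n + 3. -/

import Mathlib

/-- `B_{1,s}(x)`: all strings of length `L - 1` obtained from `x` by one deletion
and at most `s` substitutions. -/
def ball (s : ℕ) {L : ℕ} (x : Fin L → Bool) : Set (Fin (L - 1) → Bool) :=
  {y | ∃ f : Fin (L - 1) → Fin L, StrictMono f ∧ hammingDist y (x ∘ f) ≤ s}

/-- Flip at most one coordinate. -/
def flipO {m : ℕ} (o : Option (Fin m)) (w : Fin m → Bool) : Fin m → Bool :=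
  match o with
  | none => w
  | some j => Function.update w j (!(w j))

lemma hammingDist_eq_card {m : ℕ} (u v : Fin m → Bool) :
    hammingDist u v = (Finset.univ.filter fun k => u k ≠ v k).card := rfl

lemma exists_flip1 {m : ℕ} (u v : Fin m → Bool) (h : hammingDist u v ≤ 1) :
    ∃ o, u = flipO o v := by
  by_cases huv : u = v
  · exact ⟨none, huv⟩
  · obtain ⟨j, hj⟩ := Function.ne_iff.mp huv
    refine ⟨some j, funext fun i => ?_⟩
    by_cases hij : i = j
    · subst hij
      simp only [flipO, Function.update_self]
      revert hj; cases u i <;> cases v i <;> simp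
    · simp only [flipO, Function.update_of_ne hij]
      by_contra hne
      have hsub : ({i, j} : Finset (Fin m)) ⊆ Finset.univ.filter (fun k => u k ≠ v k) := by
        intro k hk
        simp only [Finset.mem_filter, Finset.mem_univ, true_and]
        rcases Finset.mem_insert.mp hk with rfl | hk
        · exact hne
        · exact Finset.mem_singleton.mp hk ▸ hj
      have h2 : ({i, j} : Finset (Fin m)).card = 2 := Finset.card_pair hij
      have hle := Finset.card_le_card hsub
      rw [h2, ← hammingDist_eq_card] at hle
      omega

lemma exists_flip2 {m : ℕ} (u v : Fin m → Bool) (h : hammingDist u v ≤ 2) :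
    ∃ o₁ o₂, u = flipO o₂ (flipO o₁ v) := by
  by_cases huv : u = v
  · exact ⟨none, none, huv⟩
  · obtain ⟨j, hj⟩ := Function.ne_iff.mp huv
    set w := flipO (some j) v with hw
    have hd : hammingDist u w ≤ 1 := by
      have hsub : (Finset.univ.filter fun k => u k ≠ w k) ⊆
          (Finset.univ.filter fun k => u k ≠ v k).erase j := by
        intro k hk
        simp only [Finset.mem_filter, Finset.mem_univ, true_and] at hk
        by_cases hkj : k = j
        · subst hkj
          exfalso; apply hk
          simp only [hw, flipO, Function.update_self]
          revert hj; cases u k <;> cases v k <;> simp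
        · refine Finset.mem_erase.mpr ⟨hkj, ?_⟩
          simp only [Finset.mem_filter, Finset.mem_univ, true_and]
          simpa [hw, flipO, Function.update_of_ne hkj] using hk
      have hjmem : j ∈ (Finset.univ.filter fun k => u k ≠ v k) := by
        simp only [Finset.mem_filter, Finset.mem_univ, true_and]; exact hj
      calc hammingDist u w = (Finset.univ.filter fun k => u k ≠ w k).card :=
            hammingDist_eq_card u w
        _ ≤ ((Finset.univ.filter fun k => u k ≠ v k).erase j).card :=
            Finset.card_le_card hsub
        _ = (Finset.univ.filter fun k => u k ≠ v k).card - 1 :=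
            Finset.card_erase_of_mem hjmem
        _ = hammingDist u v - 1 := by rw [← hammingDist_eq_card]
        _ ≤ 1 := by omega
    obtain ⟨o, ho⟩ := exists_flip1 u w hd
    exact ⟨some j, o, ho⟩

lemma strictMono_eq_succAbove {m : ℕ} {f : Fin m → Fin (m + 1)} (hf : StrictMono f) :
    ∃ p : Fin (m + 1), f = p.succAbove := by
  classical
  have hinj : Function.Injective f := hf.injective
  have hcard : (Finset.univ.image f).card = m := by
    rw [Finset.card_image_of_injective _ hinj, Finset.card_univ, Fintype.card_fin]
  have hccard : (Finset.univ.image f)ᶜ.card = 1 := by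
    rw [Finset.card_compl, hcard, Fintype.card_fin]; omega
  obtain ⟨p, hp⟩ := Finset.card_eq_one.mp hccard
  have hrange : Set.range f = Set.range p.succAbove := by
    rw [Fin.range_succAbove]
    have h1 : Set.range f = ((Finset.univ.image f : Finset (Fin (m + 1))) : Set (Fin (m + 1))) := by
      rw [Finset.coe_image, Finset.coe_univ, Set.image_univ]
    rw [h1, ← compl_compl (Finset.univ.image f), hp]
    simp
  haveI : WellFoundedLT (Fin m) := inferInstance
  exact ⟨p, (StrictMono.range_inj hf (Fin.strictMono_succAbove p)).mp hrange⟩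

/-- Decoder: from parameters, reconstruct a candidate confusable word. -/
def decode {m : ℕ} (c : Fin (m + 1) → Bool)
    (t : Fin (m + 1) × Fin (m + 1) × Bool × Option (Fin m) × Option (Fin m)) :
    Fin (m + 1) → Bool :=
  t.2.1.insertNth t.2.2.1 (flipO t.2.2.2.2 (flipO t.2.2.2.1 (c ∘ t.1.succAbove)))

lemma decode_covers {m : ℕ} (c x : Fin (m + 1) → Bool)
    (h : ¬ Disjoint (ball 1 x) (ball 1 c)) : ∃ t, decode c t = x := by
  rw [Set.not_disjoint_iff] at h
  obtain ⟨y, ⟨f₁, hf₁, hd₁⟩, f₂, hf₂, hd₂⟩ := h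
  obtain ⟨q, rfl⟩ := strictMono_eq_succAbove hf₁
  obtain ⟨p, rfl⟩ := strictMono_eq_succAbove hf₂
  have hd : hammingDist (x ∘ q.succAbove) (c ∘ p.succAbove) ≤ 2 := by
    calc hammingDist (x ∘ q.succAbove) (c ∘ p.succAbove)
        ≤ hammingDist (x ∘ q.succAbove) y + hammingDist y (c ∘ p.succAbove) :=
          hammingDist_triangle _ _ _
      _ ≤ 1 + 1 := by rw [hammingDist_comm (x ∘ q.succAbove) y]; exact Nat.add_le_add hd₁ hd₂
  obtain ⟨o₁, o₂, ho⟩ := exists_flip2 (x ∘ q.succAbove) (c ∘ p.succAbove) hd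
  refine ⟨(p, q, x q, o₁, o₂), ?_⟩
  show q.insertNth (x q) (flipO o₂ (flipO o₁ (c ∘ p.succAbove))) = x
  rw [← ho]
  exact Fin.insertNth_self_removeNth q x

theorem stmt15 (n : ℕ) (hn : 6 * Real.logb 2 n + 3 < (n : ℝ)) :
    ∃ C : Set (Fin n → Bool),
      C.Nonempty ∧
      (∀ c ∈ C, ∀ c' ∈ C, c ≠ c' → Disjoint (ball 1 c) (ball 1 c')) ∧
      (n : ℝ) - Real.logb 2 (Nat.card C) ≤ 6 * Real.logb 2 n + 3 := by
  classical
  have hn1 : 1 ≤ n := by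
    by_contra hcon
    push_neg at hcon
    interval_cases n
    norm_num at hn
  obtain ⟨m, rfl⟩ : ∃ m, n = m + 1 := ⟨n - 1, (Nat.succ_pred_eq_of_pos hn1).symm⟩
  set Ω := (Fin (m + 1) → Bool) with hΩ
  set P : Finset Ω → Prop :=
    fun s => ∀ c ∈ s, ∀ c' ∈ s, c ≠ c' → Disjoint (ball 1 c) (ball 1 c') with hP
  set S : Finset (Finset Ω) := Finset.univ.filter P with hS
  have hSne : S.Nonempty := ⟨∅, by simp [hS, hP]⟩
  obtain ⟨C, hCS, hCmax⟩ := S.exists_maximal hSne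
  have hCP : P C := (Finset.mem_filter.mp hCS).2
  -- coverage by maximality
  have hcov : ∀ x : Ω, ∃ c ∈ C, ¬ Disjoint (ball 1 x) (ball 1 c) := by
    intro x
    by_cases hx : x ∈ C
    · refine ⟨x, hx, ?_⟩
      rw [Set.not_disjoint_iff]
      exact ⟨x ∘ Fin.succ, ⟨Fin.succ, Fin.strictMono_succ, by simp⟩,
        ⟨Fin.succ, Fin.strictMono_succ, by simp⟩⟩
    · by_contra hno
      push_neg at hno
      have hmem : insert x C ∈ S := by
        refine Finset.mem_filter.mpr ⟨Finset.mem_univ _, ?_⟩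
        intro c hc c' hc' hne
        rcases Finset.mem_insert.mp hc with hcx | hcC
        · rcases Finset.mem_insert.mp hc' with hcx' | hc'C
          · exact absurd (hcx.trans hcx'.symm) hne
          · exact hcx ▸ hno c' hc'C
        · rcases Finset.mem_insert.mp hc' with hcx' | hc'C
          · exact hcx' ▸ (hno c hcC).symm
          · exact hCP c hcC c' hc'C hne
      exact hx (hCmax hmem (Finset.subset_insert x C) (Finset.mem_insert_self x C))
  -- counting
  set T := (Fin (m + 1) × Fin (m + 1) × Bool × Option (Fin m) × Option (Fin m))
  have hTcard : Fintype.card T = 2 * (m + 1) ^ 4 := by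
    simp [T, Fintype.card_option]
    ring
  set confus : Ω → Finset Ω :=
    fun c => Finset.univ.filter (fun x => ¬ Disjoint (ball 1 x) (ball 1 c)) with hconfus
  have hconfcard : ∀ c : Ω, (confus c).card ≤ 2 * (m + 1) ^ 4 := by
    intro c
    have hsub : confus c ⊆ Finset.univ.image (decode c) := by
      intro x hx
      rw [hconfus, Finset.mem_filter] at hx
      obtain ⟨t, ht⟩ := decode_covers c x hx.2
      exact Finset.mem_image.mpr ⟨t, Finset.mem_univ _, ht⟩
    calc (confus c).card ≤ (Finset.univ.image (decode c)).card := Finset.card_le_card hsub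
      _ ≤ (Finset.univ : Finset T).card := Finset.card_image_le
      _ = 2 * (m + 1) ^ 4 := by rw [Finset.card_univ, hTcard]
  have hbig : 2 ^ (m + 1) ≤ C.card * (2 * (m + 1) ^ 4) := by
    have hcover : (Finset.univ : Finset Ω) ⊆ C.biUnion confus := by
      intro x _
      obtain ⟨c, hc, hcd⟩ := hcov x
      exact Finset.mem_biUnion.mpr ⟨c, hc, by
        rw [hconfus, Finset.mem_filter]; exact ⟨Finset.mem_univ _, hcd⟩⟩
    calc 2 ^ (m + 1) = Fintype.card Ω := by simp [hΩ]
      _ = (Finset.univ : Finset Ω).card := (Finset.card_univ).symm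
      _ ≤ (C.biUnion confus).card := Finset.card_le_card hcover
      _ ≤ ∑ c ∈ C, (confus c).card := Finset.card_biUnion_le
      _ ≤ ∑ c ∈ C, 2 * (m + 1) ^ 4 := Finset.sum_le_sum fun c _ => hconfcard c
      _ = C.card * (2 * (m + 1) ^ 4) := by rw [Finset.sum_const, smul_eq_mul]
  have hCne : C.Nonempty := by
    obtain ⟨c, hc, _⟩ := hcov (fun _ => false)
    exact ⟨c, hc⟩
  refine ⟨(C : Set Ω), by exact_mod_cast hCne, fun c hc c' hc' hne => hCP c (by exact_mod_cast hc)
    c' (by exact_mod_cast hc') hne, ?_⟩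
  -- final real arithmetic
  have hNat : Nat.card (C : Set Ω) = C.card := by
    rw [Nat.card_coe_set_eq, Set.ncard_coe_finset]
  rw [hNat]
  have hk1 : 1 ≤ C.card := Finset.card_pos.mpr hCne
  have hkR : (1 : ℝ) ≤ (C.card : ℝ) := by exact_mod_cast hk1
  have hbigR : (2 : ℝ) ^ (m + 1) ≤ (C.card : ℝ) * (2 * ((m : ℝ) + 1) ^ 4) := by
    have := hbig
    have h2 : ((2 ^ (m + 1) : ℕ) : ℝ) ≤ ((C.card * (2 * (m + 1) ^ 4) : ℕ) : ℝ) := by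
      exact_mod_cast this
    push_cast at h2
    convert h2 using 2
  have hm1pos : (0 : ℝ) < (m : ℝ) + 1 := by positivity
  have hlog := Real.logb_le_logb_of_le (by norm_num : (1:ℝ) < 2) (by positivity) hbigR
  rw [Real.logb_mul (by positivity) (by positivity), Real.logb_mul (by positivity) (by positivity),
    ← Real.rpow_natCast (2 : ℝ) (m + 1)] at hlog
  rw [Real.logb_rpow (by norm_num) (by norm_num)] at hlog
  rw [Real.logb_pow, Real.logb_self_eq_one (by norm_num)] at hlog
  have hlognn : 0 ≤ Real.logb 2 ((m : ℝ) + 1) := Real.logb_nonneg (by norm_num) (by linarith)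
  have hcast : ((m + 1 : ℕ) : ℝ) = (m : ℝ) + 1 := by push_cast; ring
  rw [hcast]
  push_cast at hlog
  linarith
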